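/- (Removing a zero-gain item preserves subsequent gains) Let E be a finite set and f : 2^E → ℝ a monotonically increasing submodular function. Let A = (a₁, …, a_L) be an ordering of E and suppose the j-th item has zero marginal gain: f(A_{j-1} ∪ {a_j}) = f(A_{j-1}). Then for every k > j, f(A_k) = f(A_k \ {a_j}); consequently, the marginal gains of all items other than a_j are unchanged when a_j is deleted from the ordering, and the objective value ∑_k g_A(a_k) w(a_k) computed on the ordering with a_j removed equals that of A for any weights w. -/

import Mathlib

open Finset

/-- The set of the first `k` items of the ordering `A`, i.e. `A_k`. -/
def prefixSet {E : Type*} [DecidableEq E] (A : List E) (k : ℕ) : Finset E :=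
  (A.take k).toFinset

/-- The marginal gain `g_A(a_k) = f(A_{k-1} ∪ {a_k}) − f(A_{k-1})` of the item at
(0-based) position `i` of the ordering `A`. -/
def gain {E : Type*} [DecidableEq E] (f : Finset E → ℝ) (A : List E) (i : Fin A.length) : ℝ :=
  f (insert (A.get i) (prefixSet A i.val)) - f (prefixSet A i.val)

section Aux

variable {E : Type*} [DecidableEq E]

lemma prefixSet_succ (A : List E) (k : ℕ) (hk : k < A.length) :
    prefixSet A (k + 1) = insert A[k] (prefixSet A k) := by
  ext x
  simp only [prefixSet, List.take_succ, List.getElem?_eq_getElem hk, Option.toList_some,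
    List.mem_toFinset, List.mem_append, List.mem_singleton, Finset.mem_insert]
  tauto

lemma not_mem_prefixSet_self (A : List E) (hnd : A.Nodup) (k : ℕ) (hk : k < A.length) :
    A[k] ∉ prefixSet A k := by
  intro hmem
  rw [prefixSet, List.mem_toFinset, List.mem_iff_getElem] at hmem
  obtain ⟨i, hi, hEq⟩ := hmem
  have hi' : i < k := by simpa using lt_of_lt_of_le hi (by simp)
  rw [List.getElem_take] at hEq
  have := (hnd.getElem_inj_iff).mp hEq
  omega

lemma mem_prefixSet (A : List E) {jv k : ℕ} (hj : jv < A.length) (hjk : jv < k) :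
    A[jv] ∈ prefixSet A k := by
  have hlen : jv < (A.take k).length := by simp [List.length_take]; omega
  have := List.getElem_mem hlen
  rw [List.getElem_take] at this
  simpa [prefixSet, List.mem_toFinset] using this

lemma prefixSet_eraseIdx_of_le (A : List E) {jv k : ℕ} (hj : jv < A.length) (hk : k ≤ jv) :
    prefixSet (A.eraseIdx jv) k = prefixSet A k := by
  unfold prefixSet
  congr 1
  rw [List.eraseIdx_eq_take_drop_succ, List.take_append]
  have hlen : (A.take jv).length = jv := by simp [List.length_take]; omega
  rw [hlen]
  have h0 : k - jv = 0 := by omega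
  rw [h0, List.take_zero, List.append_nil, List.take_take]
  congr 1
  omega

lemma not_mem_drop_succ (A : List E) (hnd : A.Nodup) {jv : ℕ} (hj : jv < A.length) :
    A[jv] ∉ A.drop (jv + 1) := by
  have hsplit : A = A.take (jv + 1) ++ A.drop (jv + 1) := (List.take_append_drop _ _).symm
  have hnd' : (A.take (jv + 1) ++ A.drop (jv + 1)).Nodup := by rw [← hsplit]; exact hnd
  rw [List.nodup_append] at hnd'
  have hmem : A[jv] ∈ A.take (jv + 1) := by
    have := mem_prefixSet A hj (Nat.lt_succ_self jv)
    simpa [prefixSet, List.mem_toFinset] using this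
  exact fun hd => hnd'.2.2 _ hmem _ hd rfl

lemma prefixSet_eraseIdx_of_ge (A : List E) (hnd : A.Nodup) {jv k : ℕ}
    (hj : jv < A.length) (hk : jv ≤ k) :
    prefixSet (A.eraseIdx jv) k = (prefixSet A (k + 1)).erase A[jv] := by
  have htake : A.take (k + 1) = A.take jv ++ A[jv] :: List.take (k - jv) (A.drop (jv + 1)) := by
    have h1 : k + 1 = jv + (k - jv + 1) := by omega
    rw [h1, List.take_add, List.drop_eq_getElem_cons hj, List.take_succ_cons]
  have htake' : (A.eraseIdx jv).take k = A.take jv ++ List.take (k - jv) (A.drop (jv + 1)) := by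
    rw [List.eraseIdx_eq_take_drop_succ, List.take_append]
    have hlen : (A.take jv).length = jv := by simp [List.length_take]; omega
    rw [hlen, List.take_take]
    congr 2
    omega
  have hnm1 : A[jv] ∉ (A.take jv).toFinset := by
    have := not_mem_prefixSet_self A hnd jv hj
    simpa [prefixSet] using this
  have hnm2 : A[jv] ∉ (List.take (k - jv) (A.drop (jv + 1))).toFinset := by
    rw [List.mem_toFinset]
    intro hmem
    exact not_mem_drop_succ A hnd hj (List.take_subset _ _ hmem)
  unfold prefixSet
  rw [htake, htake', List.toFinset_append, List.toFinset_append, List.toFinset_cons,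
    Finset.erase_union_distrib, Finset.erase_eq_of_notMem hnm1,
    Finset.erase_insert hnm2]

lemma prefixSet_stable (A : List E) {k : ℕ} (hk : A.length ≤ k) :
    prefixSet A (k + 1) = prefixSet A k := by
  unfold prefixSet
  rw [List.take_of_length_le hk, List.take_of_length_le (le_trans hk (Nat.le_succ k))]

end Aux

/-- Removing a zero-gain item preserves subsequent values of `f` on prefixes, the
marginal gains of all other items, and the objective value for any weights. -/
theorem stmt_12 {E : Type*} [Fintype E] [DecidableEq E]
    (f : Finset E → ℝ)
    (hmono : ∀ X Y : Finset E, X ⊆ Y → f X ≤ f Y)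
    (hsub : ∀ (X Y : Finset E) (e : E), X ⊆ Y → e ∉ Y →
      f (insert e Y) - f Y ≤ f (insert e X) - f X)
    (A : List E) (hnodup : A.Nodup) (hfull : ∀ e : E, e ∈ A)
    (j : Fin A.length)
    (hzero : f (insert (A.get j) (prefixSet A j.val)) = f (prefixSet A j.val)) :
    (∀ k : ℕ, (j : ℕ) < k → f (prefixSet A k) = f ((prefixSet A k).erase (A.get j))) ∧
    (∀ (i : Fin A.length) (i' : Fin (A.eraseIdx j.val).length),
      (A.eraseIdx j.val).get i' = A.get i → gain f (A.eraseIdx j.val) i' = gain f A i) ∧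
    (∀ w : E → ℝ,
      ∑ i' : Fin (A.eraseIdx j.val).length,
          gain f (A.eraseIdx j.val) i' * w ((A.eraseIdx j.val).get i') =
        ∑ i : Fin A.length, gain f A i * w (A.get i)) := by
  have hjlt : (j : ℕ) < A.length := j.isLt
  have hgetj : A.get j = A[(j : ℕ)] := rfl
  -- Part 1
  have part1 : ∀ k : ℕ, (j : ℕ) < k → f (prefixSet A k) = f ((prefixSet A k).erase (A.get j)) := by
    intro k hk
    induction k with
    | zero => omega
    | succ k ih =>
      rcases Nat.lt_or_ge k A.length with hkL | hkL
      · rcases Nat.lt_or_ge (j : ℕ) k with hjk | hjk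
        · have hIH := ih hjk
          rw [prefixSet_succ A k hkL]
          have hne : A[k] ≠ A.get j := by
            rw [hgetj]
            intro h
            have := (hnodup.getElem_inj_iff).mp h
            omega
          rw [Finset.erase_insert_of_ne hne]
          set Y := prefixSet A k with hY
          set X := Y.erase (A.get j) with hX
          have hXY : X ⊆ Y := Finset.erase_subset _ _
          have hkn : A[k] ∉ Y := not_mem_prefixSet_self A hnodup k hkL
          have h1 := hsub X Y A[k] hXY hkn
          have h2 : f (insert A[k] X) ≤ f (insert A[k] Y) :=
            hmono _ _ (Finset.insert_subset_insert _ hXY)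
          linarith
        · have hkj : k = (j : ℕ) := by omega
          rw [hkj, prefixSet_succ A _ hjlt, ← hgetj,
            Finset.erase_insert (by rw [hgetj]; exact not_mem_prefixSet_self A hnodup _ hjlt)]
          exact hzero
      · rw [prefixSet_stable A hkL]
        exact ih (lt_of_lt_of_le hjlt hkL)
  -- Part 2
  have part2 : ∀ (i : Fin A.length) (i' : Fin (A.eraseIdx j.val).length),
      (A.eraseIdx j.val).get i' = A.get i →
      gain f (A.eraseIdx j.val) i' = gain f A i := by
    intro i i' h
    have hL' : (A.eraseIdx (j : ℕ)).length = A.length - 1 := by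
      rw [List.length_eraseIdx]; simp [hjlt]
    have hi'lt : (i' : ℕ) < A.length - 1 := by rw [← hL']; exact i'.isLt
    have hget' : (A.eraseIdx (j : ℕ)).get i' = (A.eraseIdx (j : ℕ))[(i' : ℕ)] := rfl
    rcases Nat.lt_or_ge (i' : ℕ) (j : ℕ) with hc | hc
    · have hval : (A.eraseIdx (j : ℕ))[(i' : ℕ)] = A[(i' : ℕ)] := by
        rw [List.getElem_eraseIdx]; simp [hc]
      have hii : (i : ℕ) = (i' : ℕ) := by
        have : A[(i' : ℕ)] = A[(i : ℕ)] := by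
          rw [← hval, ← hget']; exact h
        exact ((hnodup.getElem_inj_iff).mp this).symm
      unfold gain
      rw [h, prefixSet_eraseIdx_of_le A hjlt (le_of_lt hc), hii]
    · have hi1 : (i' : ℕ) + 1 < A.length := by omega
      have hval : (A.eraseIdx (j : ℕ))[(i' : ℕ)] = A[(i' : ℕ) + 1] := by
        rw [List.getElem_eraseIdx]; simp [Nat.not_lt.mpr hc]
      have hii : (i : ℕ) = (i' : ℕ) + 1 := by
        have : A[(i' : ℕ) + 1] = A[(i : ℕ)] := by
          rw [← hval, ← hget']; exact h
        exact ((hnodup.getElem_inj_iff).mp this).symm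
      have hij : (j : ℕ) < (i : ℕ) := by omega
      have hiL : (i : ℕ) < A.length := i.isLt
      have hP : prefixSet (A.eraseIdx (j : ℕ)) (i' : ℕ)
          = (prefixSet A (i : ℕ)).erase A[(j : ℕ)] := by
        rw [prefixSet_eraseIdx_of_ge A hnodup hjlt hc, hii]
      have hne : A[(i : ℕ)] ≠ A[(j : ℕ)] := by
        intro hEq
        have := (hnodup.getElem_inj_iff).mp hEq
        omega
      have hgi : A.get i = A[(i : ℕ)] := rfl
      have hins : insert (A.get i) ((prefixSet A (i : ℕ)).erase A[(j : ℕ)])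
          = (prefixSet A ((i : ℕ) + 1)).erase A[(j : ℕ)] := by
        rw [hgi, ← Finset.erase_insert_of_ne hne, ← prefixSet_succ A (i : ℕ) hiL]
      have e1 : f ((prefixSet A (i : ℕ)).erase A[(j : ℕ)]) = f (prefixSet A (i : ℕ)) := by
        have := part1 (i : ℕ) hij
        rw [hgetj] at this
        exact this.symm
      have e2 : f ((prefixSet A ((i : ℕ) + 1)).erase A[(j : ℕ)])
          = f (prefixSet A ((i : ℕ) + 1)) := by
        have := part1 ((i : ℕ) + 1) (by omega)
        rw [hgetj] at this
        exact this.symm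
      unfold gain
      rw [h, hP, hins, e1, e2, prefixSet_succ A (i : ℕ) hiL, hgi]
  refine ⟨part1, part2, ?_⟩
  -- Part 3
  intro w
  obtain ⟨m, hm⟩ : ∃ m, A.length = m + 1 := ⟨A.length - 1, by omega⟩
  have hL' : (A.eraseIdx (j : ℕ)).length = m := by
    rw [List.length_eraseIdx]; simp [hjlt]; omega
  set j' : Fin (m + 1) := Fin.cast hm j with hj'
  set ι : Fin (A.eraseIdx (j : ℕ)).length → Fin A.length :=
    fun i' => Fin.cast hm.symm (j'.succAbove (Fin.cast hL' i')) with hι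
  have hval : ∀ i' : Fin (A.eraseIdx (j : ℕ)).length,
      ((ι i' : Fin A.length) : ℕ) = if (i' : ℕ) < (j : ℕ) then (i' : ℕ) else (i' : ℕ) + 1 := by
    intro i'
    rw [hι]
    dsimp only
    rw [Fin.coe_cast]
    rcases Nat.lt_or_ge (i' : ℕ) (j : ℕ) with h | h
    · rw [Fin.succAbove_of_castSucc_lt _ _ (by simp [Fin.lt_def, hj']; omega), if_pos h]
      simp
    · rw [Fin.succAbove_of_le_castSucc _ _ (by simp [Fin.le_def, hj']; omega),
        if_neg (Nat.not_lt.mpr h)]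
      simp
  have hget : ∀ i' : Fin (A.eraseIdx (j : ℕ)).length,
      (A.eraseIdx (j : ℕ)).get i' = A.get (ι i') := by
    intro i'
    show (A.eraseIdx (j : ℕ))[(i' : ℕ)] = A[((ι i' : Fin A.length) : ℕ)]
    rw [List.getElem_eraseIdx]
    rcases Nat.lt_or_ge (i' : ℕ) (j : ℕ) with h | h
    · rw [dif_pos h]
      have hv := hval i'
      rw [if_pos h] at hv
      simp [hv]
    · rw [dif_neg (Nat.not_lt.mpr h)]
      have hv := hval i'
      rw [if_neg (Nat.not_lt.mpr h)] at hv
      simp [hv]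
  have hgj : gain f A j = 0 := by
    unfold gain; rw [hzero, sub_self]
  calc ∑ i' : Fin (A.eraseIdx (j : ℕ)).length,
        gain f (A.eraseIdx (j : ℕ)) i' * w ((A.eraseIdx (j : ℕ)).get i')
      = ∑ i' : Fin (A.eraseIdx (j : ℕ)).length, gain f A (ι i') * w (A.get (ι i')) := by
        refine Finset.sum_congr rfl fun i' _ => ?_
        rw [hget i', part2 (ι i') i' (hget i')]
    _ = ∑ i'' : Fin m, gain f A (Fin.cast hm.symm (j'.succAbove i''))
          * w (A.get (Fin.cast hm.symm (j'.succAbove i''))) := by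
        refine Fintype.sum_equiv (finCongr hL') _ _ fun x => ?_
        rw [hι]
        dsimp only
        congr 2 <;> · congr 1; apply Fin.ext; simp
    _ = ∑ i : Fin A.length, gain f A i * w (A.get i) := by
        have hsplit := Fin.sum_univ_succAbove
          (fun i : Fin (m + 1) => gain f A (Fin.cast hm.symm i) * w (A.get (Fin.cast hm.symm i))) j'
        have hcastj : Fin.cast hm.symm j' = j := by apply Fin.ext; simp [hj']
        have hall : ∑ i : Fin (m + 1),
            gain f A (Fin.cast hm.symm i) * w (A.get (Fin.cast hm.symm i))
            = ∑ i : Fin A.length, gain f A i * w (A.get i) := by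
          refine Fintype.sum_equiv (finCongr hm.symm) _ _ fun x => ?_
          congr 2 <;> · congr 1; apply Fin.ext; simp
        rw [← hall, hsplit, hcastj, hgj, zero_mul, zero_add]
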